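/- Let A ⊆ EuclideanSpace ℝ (Fin n) be an open bounded set whose frontier Γ = frontier A is nonempty, and define the signed distance function u by u(x) = infDist(x, Γ) if x ∉ A and u(x) = −infDist(x, Γ) if x ∈ A. Let x ∉ Γ be a point at which u is differentiable, with gradient ∇u(x). Then for every t ∈ [0, |u(x)|), u is differentiable at the point s(t) = x − t • sgn(u(x)) • ∇u(x) and the gradient of u at s(t) equals ∇u(x); here sgn(u(x)) denotes the sign (±1) of u(x). -/

import Mathlib

open scoped RealInnerProductSpace

/-- If a segment goes from inside an open set to outside, it crosses the frontier. -/
lemma sdist_aux_cross {E : Type*} [NormedAddCommGroup E] [NormedSpace ℝ E]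
    {A : Set E} (hA : IsOpen A) {a b : E} (ha : a ∈ A) (hb : b ∉ A) :
    ∃ c ∈ segment ℝ a b, c ∈ frontier A := by
  by_contra hc
  push_neg at hc
  have hbc : b ∉ closure A := by
    intro h
    exact hb (by
      have := hc b (right_mem_segment ℝ a b)
      rw [frontier, hA.interior_eq] at this
      by_contra hb'
      exact this ⟨h, hb'⟩)
  have hconn : IsPreconnected (segment ℝ a b) := (convex_segment a b).isPreconnected
  obtain ⟨c, -, hc1, hc2⟩ := hconn (interior A) (closure A)ᶜ isOpen_interior
    isClosed_closure.isOpen_compl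
    (by
      intro w hw
      rcases Classical.em (w ∈ closure A) with h1 | h1
      · left
        by_contra h2
        exact hc w hw ⟨h1, h2⟩
      · right; exact h1)
    ⟨a, left_mem_segment ℝ a b, by rwa [hA.interior_eq]⟩
    ⟨b, right_mem_segment ℝ a b, hbc⟩
  exact hc2 (subset_closure (interior_subset hc1))

/-- Geometric estimate: `‖h + a • q‖ ≤ a + ⟪q, h⟫ + ‖h‖² / a` for a unit vector `q`. -/
lemma sdist_aux_est {E : Type*} [NormedAddCommGroup E] [InnerProductSpace ℝ E]
    {q : E} (hq : ‖q‖ = 1) {a : ℝ} (ha : 0 < a) (h : E) :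
    ‖h + a • q‖ ≤ a + ⟪q, h⟫ + ‖h‖ ^ 2 / a := by
  set c := ⟪q, h⟫ with hc_def
  set s := ‖h‖ ^ 2 / a with hs_def
  have has : a * s = ‖h‖ ^ 2 := by have := ha.ne'; rw [hs_def]; field_simp
  have hc : |c| ≤ ‖h‖ := by
    calc |c| ≤ ‖q‖ * ‖h‖ := abs_real_inner_le_norm q h
    _ = ‖h‖ := by rw [hq, one_mul]
  have hc1 : -‖h‖ ≤ c := (abs_le.1 hc).1
  have hc2 : c ≤ ‖h‖ := (abs_le.1 hc).2
  have hR : 0 ≤ a + c + s := by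
    nlinarith [sq_nonneg (a - ‖h‖), mul_le_mul_of_nonneg_left hc1 ha.le, norm_nonneg h]
  have hexp : ‖h + a • q‖ ^ 2 = ‖h‖ ^ 2 + 2 * (a * c) + a ^ 2 := by
    rw [norm_add_sq_real, real_inner_smul_right, norm_smul, hq, real_inner_comm]
    rw [Real.norm_eq_abs, abs_of_pos ha]
    ring
  have hsq : ‖h + a • q‖ ^ 2 ≤ (a + c + s) ^ 2 := by
    rw [hexp]
    nlinarith [sq_nonneg (c + s), has, sq_nonneg ‖h‖]
  calc ‖h + a • q‖ = Real.sqrt (‖h + a • q‖ ^ 2) := (Real.sqrt_sq (norm_nonneg _)).symm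
  _ ≤ Real.sqrt ((a + c + s) ^ 2) := Real.sqrt_le_sqrt hsq
  _ = a + c + s := Real.sqrt_sq hR

lemma sdist_aux_lip {E : Type*} [NormedAddCommGroup E] [NormedSpace ℝ E]
    {A : Set E} (hA : IsOpen A)
    {u : E → ℝ}
    (hu_in : ∀ x ∈ A, u x = -Metric.infDist x (frontier A))
    (hu_out : ∀ x ∉ A, u x = Metric.infDist x (frontier A))
    (a b : E) : |u a - u b| ≤ dist a b := by
  have hinf : ∀ v w : E, |Metric.infDist v (frontier A) - Metric.infDist w (frontier A)| ≤ dist v w := by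
    intro v w
    rw [abs_sub_le_iff]
    constructor
    · have := Metric.infDist_le_infDist_add_dist (x := v) (y := w) (s := frontier A)
      linarith
    · have := Metric.infDist_le_infDist_add_dist (x := w) (y := v) (s := frontier A)
      rw [dist_comm] at this
      linarith
  have hmixed : ∀ v w : E, v ∈ A → w ∉ A → |u v - u w| ≤ dist v w := by
    intro v w hv hw
    obtain ⟨c, hcseg, hcΓ⟩ := sdist_aux_cross hA hv hw
    have h1 : Metric.infDist v (frontier A) ≤ dist v c := Metric.infDist_le_dist_of_mem hcΓ
    have h2 : Metric.infDist w (frontier A) ≤ dist w c := Metric.infDist_le_dist_of_mem hcΓ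
    have h3 : dist v c + dist c w = dist v w := dist_add_dist_of_mem_segment hcseg
    rw [hu_in v hv, hu_out w hw]
    have h4 : 0 ≤ Metric.infDist v (frontier A) := Metric.infDist_nonneg
    have h5 : 0 ≤ Metric.infDist w (frontier A) := Metric.infDist_nonneg
    rw [abs_of_nonpos (by linarith), dist_comm c w] at *
    linarith
  by_cases haA : a ∈ A <;> by_cases hbA : b ∈ A
  · have h := hinf b a
    rw [dist_comm] at h
    calc |u a - u b| = |Metric.infDist b (frontier A) - Metric.infDist a (frontier A)| := by
          rw [hu_in a haA, hu_in b hbA]; congr 1; ring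
    _ ≤ dist a b := h
  · exact hmixed a b haA hbA
  · rw [abs_sub_comm, dist_comm]
    exact hmixed b a hbA haA
  · rw [hu_out a haA, hu_out b hbA]
    exact hinf a b

set_option maxHeartbeats 1000000 in
lemma sdist_main {E : Type*} [NormedAddCommGroup E] [InnerProductSpace ℝ E]
    [ProperSpace E] [CompleteSpace E]
    (A : Set E) (hA : IsOpen A)
    (hbdd : Bornology.IsBounded A) (hΓ : (frontier A).Nonempty)
    (u : E → ℝ)
    (hu_in : ∀ x ∈ A, u x = -Metric.infDist x (frontier A))
    (hu_out : ∀ x ∉ A, u x = Metric.infDist x (frontier A))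
    (x : E) (hx : x ∉ frontier A)
    (hd : DifferentiableAt ℝ u x) :
    ∀ t ∈ Set.Ico (0 : ℝ) |u x|,
      DifferentiableAt ℝ u (x - t • Real.sign (u x) • gradient u x) ∧
        gradient u (x - t • Real.sign (u x) • gradient u x) = gradient u x := by
  classical
  have habs : ∀ w : E, |u w| = Metric.infDist w (frontier A) := by
    intro w
    by_cases hw : w ∈ A
    · rw [hu_in w hw, abs_neg, abs_of_nonneg Metric.infDist_nonneg]
    · rw [hu_out w hw, abs_of_nonneg Metric.infDist_nonneg]
  have hlip := sdist_aux_lip hA hu_in hu_out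
  have hd0 : 0 < |u x| := by
    rw [habs]
    exact (isClosed_frontier.notMem_iff_infDist_pos hΓ).1 hx
  set d : ℝ := |u x| with hddef
  clear_value d
  have hune : u x ≠ 0 := by
    have h := hd0
    rw [hddef] at h
    exact abs_pos.1 h
  -- nearest point
  have hΓcpt : IsCompact (frontier A) :=
    Metric.isCompact_of_isClosed_isBounded isClosed_frontier
      (hbdd.closure.subset frontier_subset_closure)
  obtain ⟨y, hyΓ, hyd⟩ := hΓcpt.exists_infDist_eq_dist hΓ x
  have hxy : dist x y = d := by
    rw [hddef, ← hyd]
    exact (habs x).symm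
  -- sign
  set σ : ℝ := Real.sign (u x) with hσdef
  clear_value σ
  have hσcases : σ = 1 ∨ σ = -1 := by
    rw [hσdef]
    rcases lt_or_gt_of_ne hune with h | h
    · right; exact Real.sign_of_neg h
    · left; exact Real.sign_of_pos h
  have hσabs : |σ| = 1 := by rcases hσcases with h | h <;> rw [h] <;> norm_num
  have hσsq : σ * σ = 1 := by rcases hσcases with h | h <;> rw [h] <;> norm_num
  have hux : u x = σ * d := by
    rcases lt_or_gt_of_ne hune with h | h
    · rw [hσdef, Real.sign_of_neg h, hddef, abs_of_neg h]; ring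
    · rw [hσdef, Real.sign_of_pos h, hddef, abs_of_pos h]; ring
  -- the unit direction towards the nearest point
  set p : E := d⁻¹ • (y - x) with hpdef
  clear_value p
  have hyx : ‖y - x‖ = d := by rw [← dist_eq_norm, dist_comm]; exact hxy
  have hpnorm : ‖p‖ = 1 := by
    rw [hpdef, norm_smul, hyx, Real.norm_eq_abs, abs_of_pos (inv_pos.2 hd0),
      inv_mul_cancel₀ hd0.ne']
  have hyp : y = x + d • p := by
    rw [hpdef, smul_smul, mul_inv_cancel₀ hd0.ne', one_smul]
    abel
  have hdistline : ∀ s : ℝ, 0 ≤ s → dist x (x + s • p) = s := by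
    intro s hs
    rw [dist_eq_norm]
    simp [norm_smul, hpnorm, abs_of_nonneg hs]
  -- points on the ray
  have hlb : ∀ s : ℝ, 0 ≤ s → d - s ≤ Metric.infDist (x + s • p) (frontier A) := by
    intro s hs
    have h1 := Metric.infDist_le_infDist_add_dist (x := x) (y := x + s • p) (s := frontier A)
    have h2 : Metric.infDist x (frontier A) = d := by rw [hddef]; exact (habs x).symm
    rw [hdistline s hs] at h1
    linarith
  have hray : ∀ s : ℝ, 0 ≤ s → s < d →
      Metric.infDist (x + s • p) (frontier A) = d - s ∧ ((x + s • p ∈ A) ↔ (x ∈ A)) := by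
    intro s hs0 hsd
    have hub : Metric.infDist (x + s • p) (frontier A) ≤ d - s := by
      have hdy : dist (x + s • p) y = d - s := by
        rw [hyp, dist_eq_norm]
        have h3 : x + s • p - (x + d • p) = (s - d) • p := by
          rw [sub_smul]; abel
        rw [h3, norm_smul, hpnorm, mul_one, Real.norm_eq_abs, abs_of_nonpos (by linarith)]
        ring
      rw [← hdy]
      exact Metric.infDist_le_dist_of_mem hyΓ
    have hnofront : ∀ c ∈ segment ℝ x (x + s • p), c ∉ frontier A := by
      intro c hc hcΓ
      rw [segment_eq_image'] at hc
      obtain ⟨θ, hθ, rfl⟩ := hc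
      have h5 : 0 ≤ θ * s := mul_nonneg hθ.1 hs0
      have h6 : θ * s ≤ s := by nlinarith [hθ.2]
      have h7 := hlb (θ * s) h5
      have h8 : Metric.infDist (x + (θ * s) • p) (frontier A) = 0 := by
        apply Metric.infDist_zero_of_mem
        have h9 : x + (θ * s) • p = x + θ • (x + s • p - x) := by
          rw [show x + s • p - x = s • p by abel, smul_smul]
        rw [h9]
        exact hcΓ
      linarith
    have hmem : (x + s • p ∈ A) ↔ (x ∈ A) := by
      constructor
      · intro h
        by_contra hxA
        obtain ⟨c, hcseg, hcΓ⟩ := sdist_aux_cross hA h hxA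
        rw [segment_symm] at hcseg
        exact hnofront c hcseg hcΓ
      · intro h
        by_contra hzA
        obtain ⟨c, hcseg, hcΓ⟩ := sdist_aux_cross hA h hzA
        exact hnofront c hcseg hcΓ
    exact ⟨le_antisymm hub (hlb s hs0), hmem⟩
  have huz : ∀ s : ℝ, 0 ≤ s → s < d → u (x + s • p) = σ * (d - s) := by
    intro s hs0 hsd
    obtain ⟨h1, h2⟩ := hray s hs0 hsd
    by_cases hxA : x ∈ A
    · have hσ' : σ = -1 := by
        rw [hσdef]
        apply Real.sign_of_neg
        rw [hu_in x hxA]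
        have : Metric.infDist x (frontier A) = d := by rw [hddef]; exact (habs x).symm
        linarith
      rw [hu_in _ (h2.2 hxA), h1, hσ']
      ring
    · have hσ' : σ = 1 := by
        rw [hσdef]
        apply Real.sign_of_pos
        rw [hu_out x hxA]
        have : Metric.infDist x (frontier A) = d := by rw [hddef]; exact (habs x).symm
        linarith
      rw [hu_out _ (fun h => hxA (h2.1 h)), h1, hσ']
      ring
  -- gradient and Fréchet derivative
  set g : E := gradient u x with hgdef
  have hgrad : HasGradientAt u g x := by rw [hgdef]; exact hd.hasGradientAt
  clear_value g
  set F := (InnerProductSpace.toDual ℝ E) g with hFdef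
  have hF : HasFDerivAt u F x := hgrad.hasFDerivAt
  have hFapp : ∀ v : E, F v = ⟪g, v⟫ := fun v => by
    rw [hFdef]; exact InnerProductSpace.toDual_apply_apply
  -- ‖g‖ ≤ 1 from Lipschitz
  have hlipW : LipschitzWith 1 u := by
    apply LipschitzWith.of_dist_le_mul
    intro a b
    rw [Real.dist_eq, NNReal.coe_one, one_mul]
    exact hlip a b
  have hFnorm : ‖F‖ ≤ 1 := by
    rw [← hF.fderiv]
    simpa using norm_fderiv_le_of_lipschitz ℝ hlipW (x₀ := x)
  have hgnorm_le : ‖g‖ ≤ 1 := by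
    have hnm : ‖F‖ = ‖g‖ := by
      rw [hFdef]; exact (InnerProductSpace.toDual ℝ E).norm_map g
    rw [hnm] at hFnorm
    exact hFnorm
  have hFnorm' : True := trivial
  clear_value F
  -- directional derivative along p
  have hFp : F p = -σ := by
    have hline : HasDerivAt (fun r : ℝ => x + r • p) p 0 := by
      simpa using ((hasDerivAt_id (0 : ℝ)).smul_const p).const_add x
    have hcomp : HasDerivAt (fun s : ℝ => u (x + s • p)) (F p) 0 := by
      have hF0 : HasFDerivAt u F (x + (0 : ℝ) • p) := by simpa using hF
      exact hF0.comp_hasDerivAt 0 hline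
    have haff : HasDerivWithinAt (fun s : ℝ => u (x + s • p)) (-σ) (Set.Ico 0 d) 0 := by
      have h1 : HasDerivAt (fun s : ℝ => σ * (d - s)) (-σ) 0 := by
        simpa using ((hasDerivAt_id (0 : ℝ)).const_sub d).const_mul σ
      exact h1.hasDerivWithinAt.congr (fun s hs => huz s hs.1 hs.2) (huz 0 le_rfl hd0)
    exact (uniqueDiffOn_Ico 0 d 0 ⟨le_rfl, hd0⟩).eq_deriv _ hcomp.hasDerivWithinAt haff
  have hgp : ⟪g, p⟫ = -σ := by rw [← hFapp]; exact hFp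
  -- p = -(σ • g)
  have hp_eq : p = -(σ • g) := by
    have hexp : ‖p + σ • g‖ ^ 2 = ‖p‖ ^ 2 + 2 * (σ * ⟪g, p⟫) + σ ^ 2 * ‖g‖ ^ 2 := by
      rw [norm_add_sq_real, real_inner_smul_right, real_inner_comm,
        norm_smul σ g, Real.norm_eq_abs, mul_pow, sq_abs]
      try ring
    have h0 : ‖p + σ • g‖ ^ 2 ≤ 0 := by
      rw [hexp, hpnorm, hgp]
      have hσ2 : σ ^ 2 = 1 := by rw [sq]; exact hσsq
      rw [hσ2]
      nlinarith [norm_nonneg g]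
    have hnz : ‖p + σ • g‖ ^ 2 = 0 := le_antisymm h0 (by positivity)
    have : p + σ • g = 0 := norm_eq_zero.1 (sq_eq_zero_iff.1 hnz)
    exact eq_neg_of_add_eq_zero_left this
  have hgnorm : ‖g‖ = 1 := by
    have : ‖σ • g‖ = 1 := by rw [← norm_neg, ← hp_eq, hpnorm]
    rwa [norm_smul, Real.norm_eq_abs, hσabs, one_mul] at this
  -- main argument
  intro t ht
  obtain ⟨ht0, htd⟩ := ht
  set z : E := x - t • σ • g with hzdef
  clear_value z
  have hz : z = x + t • p := by
    rw [hzdef, hp_eq, smul_neg]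
    abel
  have ha : 0 < d - t := by linarith [htd]
  set a : ℝ := d - t with hadef
  clear_value a
  set q : E := σ • g with hqdef
  clear_value q
  have hq : ‖q‖ = 1 := by rw [hqdef, norm_smul, Real.norm_eq_abs, hσabs, one_mul, hgnorm]
  have hqp : q = -p := by rw [hp_eq]; simp
  have hzu : u z = σ * a := by rw [hz, hadef]; exact huz t ht0 htd
  have hzy : z - y = a • q := by
    rw [hz, hyp, hqp, hadef]
    rw [smul_neg, sub_smul]
    abel
  -- the key little-o estimate
  have hFz : HasFDerivAt u F z := by
    rw [hasFDerivAt_iff_isLittleO_nhds_zero]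
    have hr : (fun h : E => u (x + h) - u x - F h) =o[nhds 0] fun h => h :=
      hasFDerivAt_iff_isLittleO_nhds_zero.1 hF
    rw [Asymptotics.isLittleO_iff] at hr ⊢
    intro ε hε
    have hball : Metric.ball (0 : E) (ε / 2 * a) ∈ nhds (0 : E) :=
      Metric.ball_mem_nhds _ (by positivity)
    filter_upwards [hr (half_pos hε), hball] with h h1 h2
    rw [Metric.mem_ball, dist_zero_right] at h2
    set r : ℝ := u (x + h) - u x - F h with hrdef
    clear_value r
    have h1' : |r| ≤ ε / 2 * ‖h‖ := by rw [← Real.norm_eq_abs]; exact h1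
    -- upper bound
    have key1 : σ * u (z + h) ≤ ‖h + a • q‖ := by
      calc σ * u (z + h) ≤ |σ * u (z + h)| := le_abs_self _
      _ = |u (z + h)| := by rw [abs_mul, hσabs, one_mul]
      _ = Metric.infDist (z + h) (frontier A) := habs _
      _ ≤ dist (z + h) y := Metric.infDist_le_dist_of_mem hyΓ
      _ = ‖h + a • q‖ := by
          rw [dist_eq_norm]
          congr 1
          rw [show z + h - y = (z - y) + h by abel, hzy]
          abel
    -- lower bound
    have key2 : σ * u (x + h) - t ≤ σ * u (z + h) := by
      have hlz := hlip (z + h) (x + h)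
      have hdzx : dist (z + h) (x + h) = t := by
        rw [dist_eq_norm, show z + h - (x + h) = z - x by abel, hz,
          show x + t • p - x = t • p by abel, norm_smul, hpnorm, Real.norm_eq_abs,
          abs_of_nonneg ht0, mul_one]
      rw [hdzx] at hlz
      have hna := neg_abs_le (σ * (u (z + h) - u (x + h)))
      have habs2 : |σ * (u (z + h) - u (x + h))| ≤ t := by
        rw [abs_mul, hσabs, one_mul]
        exact hlz
      nlinarith [hna, habs2]
    have hest := sdist_aux_est hq ha h
    have hqh : ⟪q, h⟫ = σ * F h := by
      rw [hFapp, hqdef, real_inner_smul_left]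
    have hσuz : σ * u z = a := by
      rw [hzu, ← mul_assoc, hσsq, one_mul]
    have hσux : σ * u (x + h) = d + σ * F h + σ * r := by
      have hx' : u (x + h) = σ * d + F h + r := by rw [hrdef, hux]; ring
      rw [hx']
      linear_combination d * hσsq
    have hDu : σ * (u (z + h) - u z - F h) ≤ ‖h‖ ^ 2 / a := by
      have e1 : σ * (u (z + h) - u z - F h) = σ * u (z + h) - σ * u z - σ * F h := by ring
      rw [e1, hσuz, ← hqh]
      linarith [key1, hest]
    have hDl : -(|r|) ≤ σ * (u (z + h) - u z - F h) := by
      have e1 : σ * (u (z + h) - u z - F h) = σ * u (z + h) - σ * u z - σ * F h := by ring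
      rw [e1, hσuz]
      have hra : -|r| ≤ σ * r := by
        rcases hσcases with hσ | hσ <;> rw [hσ] <;> simp <;> [exact neg_abs_le r; exact le_abs_self r]
      linarith [key2, hσux, hra, hadef.le, hadef.ge]
    have hcomb : |u (z + h) - u z - F h| ≤ |r| + ‖h‖ ^ 2 / a := by
      have habs3 : |u (z + h) - u z - F h| = |σ * (u (z + h) - u z - F h)| := by
        rw [abs_mul, hσabs, one_mul]
      rw [habs3, abs_le]
      have hpos : (0 : ℝ) ≤ ‖h‖ ^ 2 / a := by positivity
      constructor
      · linarith [hDl, abs_nonneg r]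
      · linarith [hDu, abs_nonneg r]
    have hsq : ‖h‖ ^ 2 / a ≤ ε / 2 * ‖h‖ := by
      rw [div_le_iff₀ ha]
      nlinarith [norm_nonneg h, h2]
    rw [Real.norm_eq_abs]
    calc |u (z + h) - u z - F h| ≤ |r| + ‖h‖ ^ 2 / a := hcomb
    _ ≤ ε / 2 * ‖h‖ + ε / 2 * ‖h‖ := add_le_add h1' hsq
    _ = ε * ‖h‖ := by ring
  have hGz : HasGradientAt u g z := by
    rw [hasGradientAt_iff_hasFDerivAt, ← hFdef]
    exact hFz
  exact ⟨hGz.differentiableAt, hGz.gradient⟩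




/-- Proposition 2 of the paper: the gradient of the signed distance function `u` is constant
along the ray `s t = x - t • sgn (u x) • ∇u x` for `t ∈ [0, |u x|)`. -/
theorem signedDist_gradient_constant_along_ray
    {n : ℕ} (A : Set (EuclideanSpace ℝ (Fin n))) (hA : IsOpen A)
    (hbdd : Bornology.IsBounded A) (hΓ : (frontier A).Nonempty)
    (u : EuclideanSpace ℝ (Fin n) → ℝ)
    (hu_in : ∀ x ∈ A, u x = -Metric.infDist x (frontier A))
    (hu_out : ∀ x ∉ A, u x = Metric.infDist x (frontier A))
    (x : EuclideanSpace ℝ (Fin n)) (hx : x ∉ frontier A)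
    (hd : DifferentiableAt ℝ u x) :
    ∀ t ∈ Set.Ico (0 : ℝ) |u x|,
      DifferentiableAt ℝ u (x - t • Real.sign (u x) • gradient u x) ∧
        gradient u (x - t • Real.sign (u x) • gradient u x) = gradient u x :=
  sdist_main A hA hbdd hΓ u hu_in hu_out x hx hd
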